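/- If a hypothesis class H on instance space X has Littlestone dimension at most d, then for every t >= 0 and every depth-t X-valued tree x, the number of sign-paths realized by H on x satisfies |S(H,x)| <= sum_{i=0}^{d} binom(t, i). -/

import Mathlib

/-- A depth-`t` `X`-valued tree: a family of maps `x_s : {-1,+1}^(s-1) → X`. -/
def XTree (X : Type*) (t : ℕ) := (s : Fin t) → (Fin s.val → ℤ) → X

/-- A sign path: a sequence with entries in `{-1,+1}`. -/
def IsSignPath {t : ℕ} (ε : Fin t → ℤ) : Prop := ∀ s, ε s = 1 ∨ ε s = -1

/-- `S(H, x)`: the set of sign paths realized by some hypothesis `h ∈ H` along the tree `x`,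
i.e. `ε_s = h (x_s (ε_1, …, ε_{s-1}))` for all `s`. -/
def realizedPaths {X : Type*} (H : Set (X → ℤ)) {t : ℕ} (x : XTree X t) :
    Set (Fin t → ℤ) :=
  {ε | IsSignPath ε ∧ ∃ h ∈ H, ∀ s : Fin t,
    ε s = h (x s (fun i => ε ⟨i.val, i.isLt.trans s.isLt⟩))}

/-- The tree shattering coefficient `S(H, t)`: the maximum of `|S(H, x)|` over
all depth-`t` `X`-valued trees `x`. -/
noncomputable def treeShatter {X : Type*} (H : Set (X → ℤ)) (t : ℕ) : ℕ :=
  ⨆ x : XTree X t, (realizedPaths H x).ncard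

/-- A depth-`t` tree is shattered by `H` if every sign path is realized by some `h ∈ H`. -/
def Shattered {X : Type*} (H : Set (X → ℤ)) {t : ℕ} (x : XTree X t) : Prop :=
  ∀ ε : Fin t → ℤ, IsSignPath ε → ε ∈ realizedPaths H x

/- ### Auxiliary lemmas -/

lemma realized_finite {X : Type*} (H : Set (X → ℤ)) {t : ℕ} (x : XTree X t) :
    (realizedPaths H x).Finite := by
  apply Set.Finite.subset (Set.Finite.pi (fun _ : Fin t => Set.toFinite ({1, -1} : Set ℤ)))
  intro ε hε
  rw [Set.mem_pi]
  intro i _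
  rcases hε.1 i with h | h <;> simp [h]

lemma pascal_sum (t d : ℕ) :
    ∑ i ∈ Finset.range (d + 1), (t + 1).choose i
      = ∑ i ∈ Finset.range (d + 1), t.choose i + ∑ i ∈ Finset.range d, t.choose i := by
  induction d with
  | zero => simp
  | succ d ih =>
      rw [Finset.sum_range_succ, ih, Finset.sum_range_succ (fun i => t.choose i) (d + 1),
        Finset.sum_range_succ (fun i => t.choose i) d, Nat.choose_succ_succ]
      ring

lemma empty_case {X : Type*} {H : Set (X → ℤ)}
    (hno : ∀ x : XTree X 0, ¬ Shattered H x) {t : ℕ} (x : XTree X t) :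
    realizedPaths H x = ∅ := by
  ext ε
  simp only [Set.mem_empty_iff_false, iff_false]
  rintro ⟨-, h, hH, -⟩
  exact hno (fun s _ => s.elim0)
    (fun ε' _ => ⟨fun s => s.elim0, h, hH, fun s => s.elim0⟩)

lemma ncard_split {α β : Type*} {S : Set β} {A B : Set α} {f g : α → β}
    (hA : A.Finite) (hB : B.Finite) (h : S ⊆ f '' A ∪ g '' B) :
    S.ncard ≤ A.ncard + B.ncard :=
  calc S.ncard ≤ (f '' A ∪ g '' B).ncard :=
        Set.ncard_le_ncard h ((hA.image f).union (hB.image g))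
    _ ≤ (f '' A).ncard + (g '' B).ncard := Set.ncard_union_le _ _
    _ ≤ A.ncard + B.ncard := add_le_add (Set.ncard_image_le hA) (Set.ncard_image_le hB)

lemma aux_bound {X : Type*} : ∀ (t d : ℕ) (H : Set (X → ℤ)),
    (∀ x : XTree X d, ¬ Shattered H x) → ∀ x : XTree X t,
    (realizedPaths H x).ncard ≤ ∑ i ∈ Finset.range d, t.choose i := by
  intro t
  induction t with
  | zero =>
      intro d H hno x
      match d with
      | 0 =>
          rw [empty_case hno x]
          simp
      | d + 1 =>
          have hsub : realizedPaths H x ⊆ {fun s => s.elim0} := by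
            intro ε _
            exact Set.mem_singleton_iff.mpr (funext fun s => s.elim0)
          have h1 : (realizedPaths H x).ncard ≤ 1 := by
            calc (realizedPaths H x).ncard
                ≤ ({fun s => s.elim0} : Set (Fin 0 → ℤ)).ncard :=
                  Set.ncard_le_ncard hsub (Set.finite_singleton _)
              _ = 1 := Set.ncard_singleton _
          refine h1.trans ?_
          have : (1 : ℕ) = Nat.choose 0 0 := rfl
          rw [this]
          exact Finset.single_le_sum (f := fun i => Nat.choose 0 i)
            (fun _ _ => Nat.zero_le _) (Finset.mem_range.mpr (Nat.succ_pos d))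
  | succ t' ih =>
      intro d H hno x
      match d with
      | 0 =>
          rw [empty_case hno x]
          simp
      | d' + 1 =>
          -- root of the tree
          set root : X := x ⟨0, Nat.succ_pos t'⟩ (fun i => i.elim0) with hroot_def
          -- subclasses
          set H1 : Set (X → ℤ) := {h ∈ H | h root = 1} with hH1_def
          set H2 : Set (X → ℤ) := {h ∈ H | h root = -1} with hH2_def
          -- subtrees
          set sub : ℤ → XTree X t' :=
            fun σ s ε => x s.succ (Fin.cases σ ε) with hsub_def
          -- the realized paths split along the first sign
          have key : ∀ σ : ℤ, ∀ ε ∈ realizedPaths H x, ε 0 = σ →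
              ε ∈ Fin.cons σ '' realizedPaths {h ∈ H | h root = σ} (sub σ) := by
            rintro σ ε ⟨hsp, h, hH, hreal⟩ hε0
            have hzero : (0 : Fin (t' + 1)) = ⟨0, Nat.succ_pos t'⟩ := rfl
            have hr0 := hreal ⟨0, Nat.succ_pos t'⟩
            have hargs : (fun i : Fin 0 =>
                ε ⟨i.val, i.isLt.trans (Nat.succ_pos t')⟩) = (fun i : Fin 0 => i.elim0) :=
              funext fun i => i.elim0
            have hroot1 : h root = σ := by
              rw [hroot_def, ← hargs, ← hr0, ← hzero, hε0]
            refine ⟨Fin.tail ε, ⟨fun s => hsp s.succ, h, ⟨hH, hroot1⟩, ?_⟩, ?_⟩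
            · intro s
              have hr := hreal s.succ
              have hcast : (Fin.cases σ
                  (fun i : Fin s.val => Fin.tail ε ⟨i.val, i.isLt.trans s.isLt⟩) :
                    Fin (s.val + 1) → ℤ)
                  = fun i : Fin (s.succ.val) => ε ⟨i.val, i.isLt.trans s.succ.isLt⟩ := by
                funext i
                induction i using Fin.cases with
                | zero =>
                    simp only [Fin.cases_zero]
                    rw [← hε0]
                    congr 1
                | succ j =>
                    simp only [Fin.cases_succ]
                    rfl
              show Fin.tail ε s = h (sub σ s _)
              rw [hsub_def]
              simp only []
              rw [hcast]
              exact hr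
            · rw [← hε0]
              exact Fin.cons_self_tail ε
          have hsubset : realizedPaths H x ⊆
              (Fin.cons 1 '' realizedPaths H1 (sub 1)) ∪
              (Fin.cons (-1) '' realizedPaths H2 (sub (-1))) := by
            intro ε hε
            rcases hε.1 0 with h0 | h0
            · exact Or.inl (key 1 ε hε h0)
            · exact Or.inr (key (-1) ε hε h0)
          -- at most one of the subclasses shatters a depth-d' tree
          have hkey : (∀ T : XTree X d', ¬ Shattered H1 T) ∨
              (∀ T : XTree X d', ¬ Shattered H2 T) := by
            by_contra hc
            push_neg at hc
            obtain ⟨⟨T₁, hT₁⟩, ⟨T₂, hT₂⟩⟩ := hc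
            -- combined tree
            set T : XTree X (d' + 1) := fun s =>
              match s with
              | ⟨0, _⟩ => fun _ => root
              | ⟨k + 1, hk⟩ => fun E =>
                  if E ⟨0, Nat.succ_pos k⟩ = 1
                  then T₁ ⟨k, Nat.lt_of_succ_lt_succ hk⟩ (fun i => E i.succ)
                  else T₂ ⟨k, Nat.lt_of_succ_lt_succ hk⟩ (fun i => E i.succ) with hT_def
            apply hno T
            intro ε hsp
            rcases hsp 0 with h1 | h1
            · obtain ⟨hsp', h, ⟨hH, hroot1⟩, hr⟩ := hT₁ (Fin.tail ε) (fun s => hsp s.succ)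
              refine ⟨hsp, h, hH, ?_⟩
              rintro ⟨k, hk⟩
              match k with
              | 0 =>
                  show ε ⟨0, hk⟩ = h root
                  rw [hroot1]
                  exact h1
              | k + 1 =>
                  have hlt : (0 : ℕ) < k + 1 := Nat.succ_pos k
                  show ε ⟨k + 1, hk⟩ = h (if ε ⟨0, Nat.lt_trans hlt hk⟩ = 1
                    then T₁ ⟨k, Nat.lt_of_succ_lt_succ hk⟩ _
                    else T₂ ⟨k, Nat.lt_of_succ_lt_succ hk⟩ _)
                  rw [if_pos (show ε ⟨0, Nat.lt_trans hlt hk⟩ = (1 : ℤ) from h1)]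
                  exact hr ⟨k, Nat.lt_of_succ_lt_succ hk⟩
            · obtain ⟨hsp', h, ⟨hH, hroot1⟩, hr⟩ := hT₂ (Fin.tail ε) (fun s => hsp s.succ)
              refine ⟨hsp, h, hH, ?_⟩
              rintro ⟨k, hk⟩
              match k with
              | 0 =>
                  show ε ⟨0, hk⟩ = h root
                  rw [hroot1]
                  exact h1
              | k + 1 =>
                  have hlt : (0 : ℕ) < k + 1 := Nat.succ_pos k
                  show ε ⟨k + 1, hk⟩ = h (if ε ⟨0, Nat.lt_trans hlt hk⟩ = 1
                    then T₁ ⟨k, Nat.lt_of_succ_lt_succ hk⟩ _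
                    else T₂ ⟨k, Nat.lt_of_succ_lt_succ hk⟩ _)
                  rw [if_neg (show ¬ ε ⟨0, Nat.lt_trans hlt hk⟩ = (1 : ℤ) from
                    fun hc => absurd (hc.symm.trans h1) (by norm_num))]
                  exact hr ⟨k, Nat.lt_of_succ_lt_succ hk⟩
          -- put the cardinality bounds together
          have hfin1 : (realizedPaths H1 (sub 1)).Finite := realized_finite _ _
          have hfin2 : (realizedPaths H2 (sub (-1))).Finite := realized_finite _ _
          have hcard : (realizedPaths H x).ncard ≤
              (realizedPaths H1 (sub 1)).ncard + (realizedPaths H2 (sub (-1))).ncard :=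
            ncard_split hfin1 hfin2 hsubset
          -- both subclasses do not shatter depth-(d'+1) trees
          have hno1 : ∀ T : XTree X (d' + 1), ¬ Shattered H1 T := by
            intro T hT
            exact hno T (fun ε hε => by
              obtain ⟨hsp, h, ⟨hH, _⟩, hr⟩ := hT ε hε
              exact ⟨hsp, h, hH, hr⟩)
          have hno2 : ∀ T : XTree X (d' + 1), ¬ Shattered H2 T := by
            intro T hT
            exact hno T (fun ε hε => by
              obtain ⟨hsp, h, ⟨hH, _⟩, hr⟩ := hT ε hε
              exact ⟨hsp, h, hH, hr⟩)
          rw [pascal_sum]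
          rcases hkey with hk1 | hk2
          · have b1 := ih d' H1 hk1 (sub 1)
            have b2 := ih (d' + 1) H2 hno2 (sub (-1))
            omega
          · have b1 := ih (d' + 1) H1 hno1 (sub 1)
            have b2 := ih d' H2 hk2 (sub (-1))
            omega

theorem stmt9 {X : Type*} (H : Set (X → ℤ))
    (hsign : ∀ h ∈ H, ∀ a : X, h a = 1 ∨ h a = -1)
    (d : ℕ) (hLdim : ∀ x : XTree X (d + 1), ¬ Shattered H x)
    (t : ℕ) (x : XTree X t) :
    (realizedPaths H x).ncard ≤ ∑ i ∈ Finset.range (d + 1), t.choose i := by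
  exact aux_bound t (d + 1) H hLdim x
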